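/- Let d: ℕ → ℕ with d(0) = 0 and d(n) the n-th letter (1-indexed) of the infinite word E_∞ (E_0 = "1", E_{n+1} = E_n E_n 0), and let a(n) = ∑_{j=0}^n d(j). Let p(n) = min{ j : a(j) = n } be the position of the n-th 1 in E_∞. Then for all n ≥ 1, p(n+1) - p(n) = r(n), where r(n) = ν₂(n) + 1 is the ruler function. -/

import Mathlib

/-- E_0 = "1", E_{n+1} = E_n ++ E_n ++ "0". -/
def Eword : ℕ → List ℕ
  | 0 => [1]
  | n + 1 => Eword n ++ Eword n ++ [0]

/-- d(0) = 0 and d(n) is the n-th letter (1-indexed) of the infinite word E_∞. -/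
def dword (n : ℕ) : ℕ := if n = 0 then 0 else (Eword n).getD (n - 1) 0

/-- a(n) = ∑_{j=0}^n d(j). -/
def aword (n : ℕ) : ℕ := ∑ j ∈ Finset.range (n + 1), dword j

/-- p(n) = min { j : a(j) = n }, the position of the n-th 1 in E_∞. -/
noncomputable def pword (n : ℕ) : ℕ := sInf {j | aword j = n}

/-! ### Auxiliary lemmas -/

lemma Eword_length (k : ℕ) : (Eword k).length = 2 ^ (k + 1) - 1 := by
  induction k with
  | zero => simp [Eword]
  | succ k ih =>
    have h1 : (1:ℕ) ≤ 2 ^ (k + 1) := Nat.one_le_two_pow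
    simp [Eword, ih, List.length_append, pow_succ]
    omega

lemma Eword_sum (k : ℕ) : (Eword k).sum = 2 ^ k := by
  induction k with
  | zero => simp [Eword]
  | succ k ih => simp [Eword, ih, pow_succ]; ring

lemma Eword_getD_stable (k t j : ℕ) (hj : j < 2 ^ (k + 1) - 1) :
    (Eword (k + t)).getD j 0 = (Eword k).getD j 0 := by
  induction t with
  | zero => rfl
  | succ t ih =>
    have hlen : j < (Eword (k + t)).length := by
      rw [Eword_length]
      have : (2:ℕ) ^ (k + 1) ≤ 2 ^ (k + t + 1) := Nat.pow_le_pow_right (by norm_num) (by omega)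
      omega
    have : Eword (k + (t + 1)) = Eword (k + t) ++ Eword (k + t) ++ [0] := rfl
    rw [this, List.append_assoc, List.getD_append _ _ _ _ hlen, ih]

lemma Eword_getD_eq (a b j : ℕ) (ha : j < 2 ^ (a + 1) - 1) (hb : j < 2 ^ (b + 1) - 1) :
    (Eword a).getD j 0 = (Eword b).getD j 0 := by
  rcases le_total a b with h | h
  · obtain ⟨t, rfl⟩ := Nat.exists_eq_add_of_le h
    exact (Eword_getD_stable a t j ha).symm
  · obtain ⟨t, rfl⟩ := Nat.exists_eq_add_of_le h
    exact Eword_getD_stable b t j hb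

lemma dword_eq (k m : ℕ) (h1 : 1 ≤ m) (h2 : m ≤ 2 ^ (k + 1) - 1) :
    dword m = (Eword k).getD (m - 1) 0 := by
  have hm : m ≠ 0 := by omega
  rw [dword, if_neg hm]
  refine Eword_getD_eq m k (m - 1) ?_ (by omega)
  have : m < 2 ^ (m + 1) - 1 := by
    have := Nat.lt_two_pow_self (n := m)
    have h1 : (2:ℕ) ^ (m + 1) = 2 * 2 ^ m := by ring
    omega
  omega

lemma aword_zero : aword 0 = 0 := by simp [aword, dword]

lemma aword_succ (m : ℕ) : aword (m + 1) = aword m + dword (m + 1) := by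
  simp [aword, Finset.sum_range_succ]

lemma aword_mono : Monotone aword := by
  apply monotone_nat_of_le_succ
  intro n
  rw [aword_succ]
  omega

lemma aword_eq_sum_take (k m : ℕ) (h : m ≤ 2 ^ (k + 1) - 1) :
    aword m = ((Eword k).take m).sum := by
  induction m with
  | zero => simp [aword_zero]
  | succ m ih =>
    have hlen : m < (Eword k).length := by rw [Eword_length]; omega
    rw [aword_succ, ih (by omega), List.sum_take_succ _ _ hlen,
        dword_eq k (m + 1) (by omega) h]
    congr 1
    simp [List.getD_eq_getElem?_getD, hlen]

/-- Block lemma: a(m + 2^(k+1) - 1) = 2^k + a(m) for m ≤ 2^(k+1) - 1. -/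
lemma aword_block (k m : ℕ) (h : m ≤ 2 ^ (k + 1) - 1) :
    aword (m + (2 ^ (k + 1) - 1)) = 2 ^ k + aword m := by
  have h1 : (1:ℕ) ≤ 2 ^ (k + 1) := Nat.one_le_two_pow
  have hle : m + (2 ^ (k + 1) - 1) ≤ 2 ^ (k + 2) - 1 := by
    have : (2:ℕ) ^ (k + 2) = 2 * 2 ^ (k + 1) := by ring
    omega
  rw [aword_eq_sum_take (k + 1) _ hle, aword_eq_sum_take k m h]
  have hE : Eword (k + 1) = Eword k ++ (Eword k ++ [0]) := by
    show Eword k ++ Eword k ++ [0] = _; rw [List.append_assoc]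
  have hlen : (Eword k).length = 2 ^ (k + 1) - 1 := Eword_length k
  rw [hE]
  have : m + (2 ^ (k + 1) - 1) = (Eword k).length + m := by omega
  rw [this, List.take_length_add_append, List.sum_append, Eword_sum,
      List.take_append_of_le_length (by omega)]

/-- Binary digit sum. -/
def sdig (n : ℕ) : ℕ := (Nat.digits 2 n).sum

lemma sdig_le (n : ℕ) : sdig n ≤ n := Nat.digit_sum_le 2 n

lemma sdig_add_pow (x k : ℕ) (h : x < 2 ^ k) : sdig (x + 2 ^ k) = sdig x + 1 := by
  have hlen : (Nat.digits 2 x).length ≤ k := by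
    rcases Nat.eq_zero_or_pos x with rfl | hx
    · simp
    · rw [Nat.digits_len 2 x (by norm_num) (by omega)]
      have : Nat.log 2 x < k := Nat.log_lt_of_lt_pow (by omega) h
      omega
  have := Nat.digits_append_zeroes_append_digits (b := 2) (k := k - (Nat.digits 2 x).length)
      (m := 1) (n := x) (by norm_num) one_pos
  rw [show (Nat.digits 2 x).length + (k - (Nat.digits 2 x).length) = k by omega] at this
  have hd1 : Nat.digits 2 1 = [1] := by simp
  rw [hd1] at this
  unfold sdig
  rw [show x + 2 ^ k = x + 2 ^ k * 1 by ring, ← this]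
  simp [List.sum_append]

/-- position formula -/
def Pw (n : ℕ) : ℕ := 2 * n - 1 - sdig (n - 1)

lemma Pw_ge (n : ℕ) (hn : 1 ≤ n) : n ≤ Pw n := by
  have := sdig_le (n - 1)
  unfold Pw; omega

lemma Pw_block (k m : ℕ) (h1 : 1 ≤ m) (h2 : m ≤ 2 ^ k) :
    Pw (m + 2 ^ k) = Pw m + (2 ^ (k + 1) - 1) := by
  have hs : sdig (m + 2 ^ k - 1) = sdig (m - 1) + 1 := by
    rw [show m + 2 ^ k - 1 = (m - 1) + 2 ^ k by omega]
    exact sdig_add_pow (m - 1) k (by omega)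
  have hle := sdig_le (m - 1)
  have h2k : (2:ℕ) ^ (k + 1) = 2 * 2 ^ k := by ring
  unfold Pw
  omega

lemma aword_Pw (n : ℕ) (hn : 1 ≤ n) :
    aword (Pw n) = n ∧ aword (Pw n - 1) = n - 1 := by
  induction n using Nat.strong_induction_on with
  | _ n ih =>
    rcases eq_or_lt_of_le hn with h1 | h2
    · -- n = 1
      subst h1
      have hP : Pw 1 = 1 := by simp [Pw, sdig]
      rw [hP]
      have hd1 : dword 1 = 1 := by
        rw [dword_eq 0 1 le_rfl (by norm_num)]
        simp [Eword]
      constructor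
      · show aword (0 + 1) = 1
        rw [aword_succ, aword_zero, hd1]
      · simp [aword_zero]
    · -- n ≥ 2
      set k := Nat.log 2 (n - 1) with hk
      have hlow : 2 ^ k ≤ n - 1 := Nat.pow_log_le_self 2 (by omega)
      have hhigh : n - 1 < 2 ^ (k + 1) := Nat.lt_pow_succ_log_self (by norm_num) _
      set m := n - 2 ^ k with hm
      have hm1 : 1 ≤ m := by omega
      have hm2 : m ≤ 2 ^ k := by omega
      have hmn : m < n := by
        have : (1:ℕ) ≤ 2 ^ k := Nat.one_le_two_pow
        omega
      obtain ⟨ihA, ihB⟩ := ih m hmn hm1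
      have hPn : Pw n = Pw m + (2 ^ (k + 1) - 1) := by
        rw [show n = m + 2 ^ k by omega]; exact Pw_block k m hm1 hm2
      have hPm1 : 1 ≤ Pw m := le_trans hm1 (Pw_ge m hm1)
      have hPmle : Pw m ≤ 2 ^ (k + 1) - 1 := by
        have := sdig_le (m - 1)
        have h2k : (2:ℕ) ^ (k + 1) = 2 * 2 ^ k := by ring
        unfold Pw; omega
      constructor
      · rw [hPn, aword_block k (Pw m) hPmle, ihA]; omega
      · have : Pw n - 1 = (Pw m - 1) + (2 ^ (k + 1) - 1) := by
          have : (1:ℕ) ≤ 2 ^ (k + 1) := Nat.one_le_two_pow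
          omega
        rw [this, aword_block k (Pw m - 1) (by omega), ihB]
        omega

lemma pword_eq (n : ℕ) (hn : 1 ≤ n) : pword n = Pw n := by
  obtain ⟨hA, hB⟩ := aword_Pw n hn
  have hmem : Pw n ∈ {j | aword j = n} := hA
  unfold pword
  apply le_antisymm (Nat.sInf_le hmem)
  · apply le_csInf ⟨Pw n, hmem⟩
    intro j hj
    by_contra hlt
    push_neg at hlt
    have : aword j ≤ aword (Pw n - 1) := aword_mono (by omega)
    rw [hB] at this
    simp only [Set.mem_setOf_eq] at hj
    omega

lemma sdig_succ_valuation (n : ℕ) (hn : 1 ≤ n) :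
    sdig (n - 1) + 1 = sdig n + padicValNat 2 n := by
  have key : ∀ m : ℕ, padicValNat 2 (Nat.factorial m) = m - sdig m := by
    intro m
    have := sub_one_mul_padicValNat_factorial (p := 2) m
    simpa [sdig] using this
  have hfact : Nat.factorial n = n * Nat.factorial (n - 1) := by
    conv_lhs => rw [show n = (n - 1) + 1 by omega]
    rw [Nat.factorial_succ]
    congr 1; omega
  have hmul : padicValNat 2 (Nat.factorial n) =
      padicValNat 2 n + padicValNat 2 (Nat.factorial (n - 1)) := by
    rw [hfact, padicValNat.mul (by omega) (Nat.factorial_ne_zero _)]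
  rw [key n, key (n - 1)] at hmul
  have h1 := sdig_le n
  have h2 := sdig_le (n - 1)
  omega

/-- The gaps between consecutive 1's in E_∞ are given by the ruler function:
    p(n+1) - p(n) = ν₂(n) + 1 for all n ≥ 1. -/
theorem pword_diff (n : ℕ) (hn : 1 ≤ n) :
    pword (n + 1) - pword n = padicValNat 2 n + 1 := by
  rw [pword_eq n hn, pword_eq (n + 1) (by omega)]
  have hkey := sdig_succ_valuation n hn
  have h1 := sdig_le (n - 1)
  have h2 := sdig_le n
  unfold Pw
  simp only [Nat.add_sub_cancel]
  omega
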